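/- Let m ≥ 1, let M, N ⊆ [m] with |M|+|N| ≥ 1, and let D = aΔ_M + cΔ_N ⊆ E^m. Then the linear left-E-code C^L_D has length |D| = 2^{|M|+|N|} and size |C^L_D| = 2^{2|M|}, and its Lee weight distribution is: the multiset {wt_Lee(c^L_D(v)) : v ∈ E^m} (with multiplicity, over all 2^{2m} elements v ∈ E^m) consists of the value 2^{|M|+|N|} with multiplicity 2^{2m-2|M|}(2^{|M|}-1)^2, the value 2^{|M|+|N|-1} with multiplicity 2^{2m-2|M|+1}(2^{|M|}-1), and the value 0 with multiplicity 2^{2m-2|M|}. -/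

import Mathlib

open Finset

/-- The simplicial complex `Δ_M ⊆ 𝔽₂^m` generated by `M ⊆ [m]`:
all vectors whose support is contained in `M`. -/
def deltaC {m : ℕ} (M : Finset (Fin m)) : Finset (Fin m → ZMod 2) :=
  Finset.univ.filter (fun w => ∀ i, w i ≠ 0 → i ∈ M)

/-- Dot product over `𝔽₂`. -/
def dotp {m : ℕ} (x y : Fin m → ZMod 2) : ZMod 2 := ∑ i, x i * y i

/-- The Gray map on a single element `a·s + c·t ↔ (s, t)` of `E = 𝔽₂ × 𝔽₂`:
`Φ(as + ct) = (t, s + t)`. -/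
def grayPair (e : ZMod 2 × ZMod 2) : Fin 2 → ZMod 2 := ![e.2, e.1 + e.2]

/-- The left codeword `c^L_D(v)` for `v = aα + cβ ↔ (α, β)`:
its coordinate at `d = (t₁, t₂) ∈ D` is `a(α·t₁) + c(β·t₁) ↔ (α·t₁, β·t₁)`. -/
def cwL {m : ℕ} (Ds : Finset ((Fin m → ZMod 2) × (Fin m → ZMod 2)))
    (v : (Fin m → ZMod 2) × (Fin m → ZMod 2)) :
    {d // d ∈ Ds} → ZMod 2 × ZMod 2 :=
  fun d => (dotp v.1 d.1.1, dotp v.2 d.1.1)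

/-- The Gray image `Φ(c^L_D(v)) ∈ 𝔽₂^{2|D|}` of the left codeword `c^L_D(v)`;
its Hamming weight (`hammingNorm`) is the Lee weight of `c^L_D(v)`. -/
def gcwL {m : ℕ} (Ds : Finset ((Fin m → ZMod 2) × (Fin m → ZMod 2)))
    (v : (Fin m → ZMod 2) × (Fin m → ZMod 2)) :
    {d // d ∈ Ds} × Fin 2 → ZMod 2 :=
  fun x => grayPair (cwL Ds v x.1) x.2

/-- The right codeword `c^R_D(v)` for `v = aα + cβ ↔ (α, β)`:
its coordinate at `d = (t₁, t₂) ∈ D` is `a(t₁·α) + c(t₂·α) ↔ (t₁·α, t₂·α)`. -/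
def cwR {m : ℕ} (Ds : Finset ((Fin m → ZMod 2) × (Fin m → ZMod 2)))
    (v : (Fin m → ZMod 2) × (Fin m → ZMod 2)) :
    {d // d ∈ Ds} → ZMod 2 × ZMod 2 :=
  fun d => (dotp d.1.1 v.1, dotp d.1.2 v.1)

/-- The Gray image `Φ(c^R_D(v)) ∈ 𝔽₂^{2|D|}` of the right codeword `c^R_D(v)`;
its Hamming weight (`hammingNorm`) is the Lee weight of `c^R_D(v)`. -/
def gcwR {m : ℕ} (Ds : Finset ((Fin m → ZMod 2) × (Fin m → ZMod 2)))
    (v : (Fin m → ZMod 2) × (Fin m → ZMod 2)) :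
    {d // d ∈ Ds} × Fin 2 → ZMod 2 :=
  fun x => grayPair (cwR Ds v x.1) x.2





lemma mem_deltaC {m : ℕ} {M : Finset (Fin m)} {w : Fin m → ZMod 2} :
    w ∈ deltaC M ↔ ∀ i ∉ M, w i = 0 := by
  simp only [deltaC, mem_filter, mem_univ, true_and]
  constructor
  · intro h i hi
    by_contra hne; exact hi (h i hne)
  · intro h i hne
    by_contra hi; exact hne (h i hi)

lemma card_deltaC {m : ℕ} (M : Finset (Fin m)) : (deltaC M).card = 2 ^ M.card := by
  have : (deltaC M).card = (Finset.univ : Finset (M → ZMod 2)).card := by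
    refine Finset.card_bij' (fun w _ => fun i : M => w i.1)
      (fun g _ => fun i => if h : i ∈ M then g ⟨i, h⟩ else 0)
      (fun _ _ => mem_univ _) ?_ ?_ ?_
    · intro g hg
      rw [mem_deltaC]
      intro i hi; simp [hi]
    · intro w hw
      funext i
      by_cases h : i ∈ M
      · simp [h]
      · simp [h, mem_deltaC.mp hw i h]
    · intro g hg
      funext i; simp
  rw [this, Finset.card_univ]
  simp [Fintype.card_fun]

lemma dotp_add_left {m : ℕ} (x y z : Fin m → ZMod 2) :
    dotp (x + y) z = dotp x z + dotp y z := by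
  simp [dotp, add_mul, Finset.sum_add_distrib]

lemma dotp_add_right {m : ℕ} (x y z : Fin m → ZMod 2) :
    dotp x (y + z) = dotp x y + dotp x z := by
  simp [dotp, mul_add, Finset.sum_add_distrib]

lemma dotp_single {m : ℕ} (γ : Fin m → ZMod 2) (i : Fin m) :
    dotp γ (Pi.single i 1) = γ i := by
  simp [dotp, Pi.single_apply, mul_ite]

lemma zmod2_ne_zero (x : ZMod 2) (h : x ≠ 0) : x = 1 := by revert x; decide

lemma count_one {m : ℕ} (M : Finset (Fin m)) (γ : Fin m → ZMod 2)
    (h : ∃ i ∈ M, γ i ≠ 0) :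
    ((deltaC M).filter (fun t => dotp γ t = 1)).card = 2 ^ (M.card - 1) := by
  obtain ⟨i₀, hi₀, hγ⟩ := h
  have hγ1 : γ i₀ = 1 := zmod2_ne_zero _ hγ
  set s : Fin m → ZMod 2 := Pi.single i₀ 1 with hs
  have hmem : ∀ t ∈ deltaC M, t + s ∈ deltaC M := by
    intro t ht
    rw [mem_deltaC] at ht ⊢
    intro i hi
    have h1 : t i = 0 := ht i hi
    have h2 : s i = 0 := by
      simp only [hs, Pi.single_apply]
      have : i ≠ i₀ := fun he => hi (he ▸ hi₀)
      simp [this]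
    simp [h1, h2]
  have hdot : ∀ t : Fin m → ZMod 2, dotp γ (t + s) = dotp γ t + 1 := by
    intro t
    rw [dotp_add_right, hs, dotp_single, hγ1]
  have hinv : ∀ t : Fin m → ZMod 2, t + s + s = t := by
    intro t; funext i
    simp [CharTwo.add_self_eq_zero, add_assoc]
  have hcardeq : ((deltaC M).filter (fun t => dotp γ t = 1)).card =
      ((deltaC M).filter (fun t => ¬ dotp γ t = 1)).card := by
    refine Finset.card_bij' (fun t _ => t + s) (fun t _ => t + s) ?_ ?_ ?_ ?_
    · intro t ht
      rw [mem_filter] at ht ⊢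
      refine ⟨hmem t ht.1, ?_⟩
      rw [hdot, ht.2]; decide
    · intro t ht
      rw [mem_filter] at ht ⊢
      refine ⟨hmem t ht.1, ?_⟩
      rw [hdot]
      have h0 : dotp γ t = 0 := by
        have : ∀ x : ZMod 2, x ≠ 1 → x = 0 := by decide
        exact this _ ht.2
      rw [h0]; decide
    · intro t _; exact hinv t
    · intro t _; exact hinv t
  have htot := Finset.card_filter_add_card_filter_not
    (s := deltaC M) (p := fun t => dotp γ t = 1)
  have hM1 : 1 ≤ M.card := Finset.card_pos.mpr ⟨i₀, hi₀⟩
  have hpow : (deltaC M).card = 2 * 2 ^ (M.card - 1) := by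
    rw [card_deltaC, ← pow_succ']
    congr 1
    omega
  omega

lemma count_zero {m : ℕ} (M : Finset (Fin m)) (γ : Fin m → ZMod 2)
    (h : ∀ i ∈ M, γ i = 0) :
    ((deltaC M).filter (fun t => dotp γ t = 1)).card = 0 := by
  rw [Finset.card_eq_zero, Finset.filter_eq_empty_iff]
  intro t ht
  rw [mem_deltaC] at ht
  have : dotp γ t = 0 := by
    unfold dotp
    apply Finset.sum_eq_zero
    intro i _
    by_cases hi : i ∈ M
    · simp [h i hi]
    · simp [ht i hi]
  simp [this]




lemma wt_eq {m : ℕ} (M N : Finset (Fin m))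
    (Ds : Finset ((Fin m → ZMod 2) × (Fin m → ZMod 2)))
    (hDs : Ds = deltaC M ×ˢ deltaC N)
    (v : (Fin m → ZMod 2) × (Fin m → ZMod 2)) :
    hammingNorm (gcwL Ds v) =
      2 ^ N.card * ( ((deltaC M).filter (fun t => dotp v.2 t = 1)).card
                   + ((deltaC M).filter (fun t => dotp (v.1 + v.2) t = 1)).card ) := by
  have h1 : hammingNorm (gcwL Ds v) =
      ∑ x : {d // d ∈ Ds} × Fin 2, if gcwL Ds v x ≠ 0 then 1 else 0 := by
    rw [hammingNorm, Finset.card_filter]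
  rw [h1, Fintype.sum_prod_type]
  have h2 : ∀ d : {d // d ∈ Ds},
      (∑ j : Fin 2, if gcwL Ds v (d, j) ≠ 0 then 1 else 0) =
      (if dotp v.2 d.1.1 = 1 then 1 else 0) +
      (if dotp (v.1 + v.2) d.1.1 = 1 then 1 else 0) := by
    intro d
    rw [Fin.sum_univ_two]
    have e0 : gcwL Ds v (d, 0) = dotp v.2 d.1.1 := by
      simp [gcwL, grayPair, cwL]
    have e1 : gcwL Ds v (d, 1) = dotp (v.1 + v.2) d.1.1 := by
      simp [gcwL, grayPair, cwL, dotp_add_left]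
    rw [e0, e1]
    have hz : ∀ x : ZMod 2, (if x ≠ 0 then (1:ℕ) else 0) = if x = 1 then 1 else 0 := by
      decide
    rw [hz, hz]
  rw [Finset.sum_congr rfl (fun d _ => h2 d)]
  have h3 : (∑ d : {d // d ∈ Ds},
      ((if dotp v.2 d.1.1 = 1 then 1 else 0) +
       (if dotp (v.1 + v.2) d.1.1 = 1 then (1:ℕ) else 0))) =
      ∑ d ∈ Ds, ((if dotp v.2 d.1 = 1 then 1 else 0) +
       (if dotp (v.1 + v.2) d.1 = 1 then (1:ℕ) else 0)) :=
    Finset.sum_coe_sort Ds (fun d => (if dotp v.2 d.1 = 1 then 1 else 0) +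
       (if dotp (v.1 + v.2) d.1 = 1 then (1:ℕ) else 0))
  rw [h3, hDs, Finset.sum_product]
  have h4 : ∀ x : Fin m → ZMod 2,
      (∑ _y ∈ deltaC N, ((if dotp v.2 x = 1 then 1 else 0) +
        (if dotp (v.1 + v.2) x = 1 then (1:ℕ) else 0))) =
      2 ^ N.card * ((if dotp v.2 x = 1 then 1 else 0) +
        (if dotp (v.1 + v.2) x = 1 then (1:ℕ) else 0)) := by
    intro x
    rw [Finset.sum_const, card_deltaC, smul_eq_mul]
  rw [Finset.sum_congr rfl (fun x _ => h4 x), ← Finset.mul_sum, Finset.sum_add_distrib,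
    ← Finset.card_filter, ← Finset.card_filter]

lemma card_shear {m : ℕ} (R : (Fin m → ZMod 2) × (Fin m → ZMod 2) → Prop) [DecidablePred R] :
    ((Finset.univ : Finset ((Fin m → ZMod 2) × (Fin m → ZMod 2))).filter
        (fun v => R (v.1 + v.2, v.2))).card =
    ((Finset.univ : Finset ((Fin m → ZMod 2) × (Fin m → ZMod 2))).filter R).card := by
  have hinv : ∀ w : (Fin m → ZMod 2) × (Fin m → ZMod 2), (w.1 + w.2 + w.2, w.2) = w := by
    intro w
    ext i : 2
    · show w.1 i + w.2 i + w.2 i = w.1 i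
      simp [add_assoc, CharTwo.add_self_eq_zero]
    · rfl
  refine Finset.card_bij' (fun v _ => (v.1 + v.2, v.2)) (fun w _ => (w.1 + w.2, w.2)) ?_ ?_ ?_ ?_
  · intro v hv
    rw [mem_filter] at hv ⊢
    exact ⟨mem_univ _, hv.2⟩
  · intro w hw
    rw [mem_filter] at hw ⊢
    refine ⟨mem_univ _, ?_⟩
    show R (w.1 + w.2 + w.2, w.2)
    rw [hinv]
    exact hw.2
  · intro v _; exact hinv v
  · intro w _; exact hinv w

lemma card_pM {m : ℕ} (M : Finset (Fin m)) :
    ((Finset.univ : Finset (Fin m → ZMod 2)).filter (fun γ => ∀ i ∈ M, γ i = 0)).card =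
      2 ^ (m - M.card) := by
  have h : (Finset.univ : Finset (Fin m → ZMod 2)).filter (fun γ => ∀ i ∈ M, γ i = 0) =
      deltaC Mᶜ := by
    ext γ
    rw [mem_filter, mem_deltaC]
    simp [Finset.mem_compl]
  rw [h, card_deltaC, Finset.card_compl]
  simp

lemma card_not_pM {m : ℕ} (M : Finset (Fin m)) :
    ((Finset.univ : Finset (Fin m → ZMod 2)).filter (fun γ => ¬ ∀ i ∈ M, γ i = 0)).card =
      2 ^ (m - M.card) * (2 ^ M.card - 1) := by
  have htot := Finset.card_filter_add_card_filter_not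
    (s := (Finset.univ : Finset (Fin m → ZMod 2))) (p := fun γ => ∀ i ∈ M, γ i = 0)
  have hc := card_pM M
  have hu : (Finset.univ : Finset (Fin m → ZMod 2)).card = 2 ^ m := by
    rw [Finset.card_univ]
    simp [Fintype.card_fun]
  have hle : M.card ≤ m := by
    have := Finset.card_le_univ M
    simpa using this
  have hm : (2:ℕ) ^ m = 2 ^ (m - M.card) * 2 ^ M.card := by
    rw [← pow_add, Nat.sub_add_cancel hle]
  have h2 : 2 ^ (m - M.card) * (2 ^ M.card - 1) =
      2 ^ (m - M.card) * 2 ^ M.card - 2 ^ (m - M.card) := by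
    rw [Nat.mul_sub]
    simp
  rw [h2, ← hm]
  rw [hc] at htot
  generalize hg : ((Finset.univ : Finset (Fin m → ZMod 2)).filter (fun γ => ¬ ∀ i ∈ M, γ i = 0)).card = x at htot ⊢
  clear hc hg
  omega

lemma image_card_lemma {m : ℕ} (M N : Finset (Fin m))
    (Ds : Finset ((Fin m → ZMod 2) × (Fin m → ZMod 2)))
    (hDs : Ds = deltaC M ×ˢ deltaC N) :
    ((Finset.univ : Finset ((Fin m → ZMod 2) × (Fin m → ZMod 2))).image (cwL Ds)).card =
      2 ^ (2 * M.card) := by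
  classical
  subst hDs
  set proj : (Fin m → ZMod 2) → (Fin m → ZMod 2) :=
    fun γ i => if i ∈ M then γ i else 0 with hproj
  have hproj_mem : ∀ γ, proj γ ∈ deltaC M := by
    intro γ
    rw [mem_deltaC]
    intro i hi
    simp [hproj, hi]
  have hdot_proj : ∀ (γ : Fin m → ZMod 2), ∀ t ∈ deltaC M, dotp (proj γ) t = dotp γ t := by
    intro γ t ht
    rw [mem_deltaC] at ht
    unfold dotp
    apply Finset.sum_congr rfl
    intro i _
    by_cases hi : i ∈ M
    · simp [hproj, hi]
    · simp [ht i hi]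
  have hmemM : ∀ d : {d // d ∈ deltaC M ×ˢ deltaC N}, d.1.1 ∈ deltaC M := by
    intro d
    have := d.2
    rw [Finset.mem_product] at this
    exact this.1
  have hcw : ∀ v : (Fin m → ZMod 2) × (Fin m → ZMod 2),
      cwL (deltaC M ×ˢ deltaC N) (proj v.1, proj v.2) = cwL (deltaC M ×ˢ deltaC N) v := by
    intro v
    funext d
    show (dotp (proj v.1) d.1.1, dotp (proj v.2) d.1.1) = (dotp v.1 d.1.1, dotp v.2 d.1.1)
    rw [hdot_proj _ _ (hmemM d), hdot_proj _ _ (hmemM d)]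
  have himg : (Finset.univ : Finset ((Fin m → ZMod 2) × (Fin m → ZMod 2))).image (cwL (deltaC M ×ˢ deltaC N)) =
      (deltaC M ×ˢ deltaC M).image (cwL (deltaC M ×ˢ deltaC N)) := by
    apply Finset.Subset.antisymm
    · intro y hy
      rw [Finset.mem_image] at hy ⊢
      obtain ⟨v, _, hv⟩ := hy
      refine ⟨(proj v.1, proj v.2), ?_, by rw [hcw v, hv]⟩
      rw [Finset.mem_product]
      exact ⟨hproj_mem _, hproj_mem _⟩
    · exact Finset.image_subset_image (Finset.subset_univ _)
  have hzeroN : (0 : Fin m → ZMod 2) ∈ deltaC N := by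
    rw [mem_deltaC]; intro i _; rfl
  have hsingle : ∀ i ∈ M, (Pi.single i 1 : Fin m → ZMod 2) ∈ deltaC M := by
    intro i hi
    rw [mem_deltaC]
    intro j hj
    have : j ≠ i := fun he => hj (he ▸ hi)
    simp [Pi.single_apply, this]
  have hinj : Set.InjOn (cwL (deltaC M ×ˢ deltaC N)) ↑(deltaC M ×ˢ deltaC M) := by
    intro v hv v' hv' he
    rw [Finset.mem_coe, Finset.mem_product, mem_deltaC, mem_deltaC] at hv hv'
    have key : ∀ i : Fin m, v.1 i = v'.1 i ∧ v.2 i = v'.2 i := by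
      intro i
      by_cases hi : i ∈ M
      · have hd : ((Pi.single i 1 : Fin m → ZMod 2), (0 : Fin m → ZMod 2)) ∈ deltaC M ×ˢ deltaC N := by
          rw [Finset.mem_product]
          exact ⟨hsingle i hi, hzeroN⟩
        have hc := congrFun he ⟨_, hd⟩
        have h1 : dotp v.1 (Pi.single i 1) = dotp v'.1 (Pi.single i 1) :=
          congrArg Prod.fst hc
        have h2 : dotp v.2 (Pi.single i 1) = dotp v'.2 (Pi.single i 1) :=
          congrArg Prod.snd hc
        rw [dotp_single, dotp_single] at h1 h2
        exact ⟨h1, h2⟩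
      · rw [hv.1 i hi, hv'.1 i hi, hv.2 i hi, hv'.2 i hi]
        exact ⟨rfl, rfl⟩
    have h1 : v.1 = v'.1 := funext (fun i => (key i).1)
    have h2 : v.2 = v'.2 := funext (fun i => (key i).2)
    exact Prod.ext h1 h2
  rw [himg, Finset.card_image_of_injOn hinj, Finset.card_product, card_deltaC, ← pow_add,
    two_mul]

lemma card_shear' {m : ℕ} (p q : (Fin m → ZMod 2) × (Fin m → ZMod 2) → Prop)
    [DecidablePred p] [DecidablePred q]
    (h : ∀ v, p v ↔ q (v.1 + v.2, v.2)) :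
    ((Finset.univ : Finset ((Fin m → ZMod 2) × (Fin m → ZMod 2))).filter p).card =
    ((Finset.univ : Finset ((Fin m → ZMod 2) × (Fin m → ZMod 2))).filter q).card := by
  have hinv : ∀ w : (Fin m → ZMod 2) × (Fin m → ZMod 2), (w.1 + w.2 + w.2, w.2) = w := by
    intro w
    ext i : 2
    · show w.1 i + w.2 i + w.2 i = w.1 i
      simp [add_assoc, CharTwo.add_self_eq_zero]
    · rfl
  refine Finset.card_bij' (fun v _ => (v.1 + v.2, v.2)) (fun w _ => (w.1 + w.2, w.2)) ?_ ?_ ?_ ?_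
  · intro v hv
    rw [mem_filter] at hv ⊢
    exact ⟨mem_univ _, (h v).mp hv.2⟩
  · intro w hw
    rw [mem_filter] at hw ⊢
    refine ⟨mem_univ _, ?_⟩
    rw [h (w.1 + w.2, w.2)]
    show q (w.1 + w.2 + w.2, w.2)
    rw [hinv]
    exact hw.2
  · intro v _; exact hinv v
  · intro w _; exact hinv w

lemma cardA_lemma {m : ℕ} (M : Finset (Fin m)) :
    ((Finset.univ : Finset ((Fin m → ZMod 2) × (Fin m → ZMod 2))).filter
      (fun v => ¬(∀ i ∈ M, (v.1 + v.2) i = 0) ∧ ¬(∀ i ∈ M, v.2 i = 0))).card =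
    2 ^ (2 * m - 2 * M.card) * (2 ^ M.card - 1) ^ 2 := by
  have hle : M.card ≤ m := by simpa using Finset.card_le_univ M
  rw [card_shear' (fun v : (Fin m → ZMod 2) × (Fin m → ZMod 2) =>
        ¬(∀ i ∈ M, (v.1 + v.2) i = 0) ∧ ¬(∀ i ∈ M, v.2 i = 0))
      (fun w => ¬(∀ i ∈ M, w.1 i = 0) ∧ ¬(∀ i ∈ M, w.2 i = 0))
      (fun v => Iff.rfl)]
  rw [← Finset.univ_product_univ, Finset.filter_product (fun γ : Fin m → ZMod 2 => ¬∀ i ∈ M, γ i = 0) (fun γ : Fin m → ZMod 2 => ¬∀ i ∈ M, γ i = 0), Finset.card_product,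
    card_not_pM]
  have h2 : (2:ℕ) ^ (m - M.card) * 2 ^ (m - M.card) = 2 ^ (2 * m - 2 * M.card) := by
    rw [← pow_add]; congr 1; omega
  rw [mul_mul_mul_comm, h2, sq]

lemma cardB_lemma {m : ℕ} (M : Finset (Fin m)) :
    ((Finset.univ : Finset ((Fin m → ZMod 2) × (Fin m → ZMod 2))).filter
      (fun v => ((∀ i ∈ M, (v.1 + v.2) i = 0) ∧ ¬(∀ i ∈ M, v.2 i = 0)) ∨
                (¬(∀ i ∈ M, (v.1 + v.2) i = 0) ∧ (∀ i ∈ M, v.2 i = 0)))).card =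
    2 ^ (2 * m - 2 * M.card + 1) * (2 ^ M.card - 1) := by
  have hle : M.card ≤ m := by simpa using Finset.card_le_univ M
  rw [card_shear' (fun v : (Fin m → ZMod 2) × (Fin m → ZMod 2) =>
        ((∀ i ∈ M, (v.1 + v.2) i = 0) ∧ ¬(∀ i ∈ M, v.2 i = 0)) ∨
        (¬(∀ i ∈ M, (v.1 + v.2) i = 0) ∧ (∀ i ∈ M, v.2 i = 0)))
      (fun w => ((∀ i ∈ M, w.1 i = 0) ∧ ¬(∀ i ∈ M, w.2 i = 0)) ∨
                (¬(∀ i ∈ M, w.1 i = 0) ∧ (∀ i ∈ M, w.2 i = 0))) (fun v => Iff.rfl)]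
  rw [Finset.filter_or]
  rw [Finset.card_union_of_disjoint]
  · rw [← Finset.univ_product_univ, Finset.filter_product (fun γ : Fin m → ZMod 2 => ∀ i ∈ M, γ i = 0) (fun γ : Fin m → ZMod 2 => ¬∀ i ∈ M, γ i = 0),
      Finset.filter_product (fun γ : Fin m → ZMod 2 => ¬∀ i ∈ M, γ i = 0) (fun γ : Fin m → ZMod 2 => ∀ i ∈ M, γ i = 0),
      Finset.card_product, Finset.card_product, card_pM, card_not_pM]
    have h2 : (2:ℕ) ^ (m - M.card) * 2 ^ (m - M.card) = 2 ^ (2 * m - 2 * M.card) := by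
      rw [← pow_add]; congr 1; omega
    have : (2:ℕ) ^ (2 * m - 2 * M.card + 1) = 2 ^ (2 * m - 2 * M.card) * 2 := pow_succ 2 _
    rw [this, ← h2]
    ring
  · rw [Finset.disjoint_left]
    intro v hv hv'
    rw [mem_filter] at hv hv'
    exact hv.2.2 hv'.2.2

lemma cardC_lemma {m : ℕ} (M : Finset (Fin m)) :
    ((Finset.univ : Finset ((Fin m → ZMod 2) × (Fin m → ZMod 2))).filter
      (fun v => (∀ i ∈ M, (v.1 + v.2) i = 0) ∧ (∀ i ∈ M, v.2 i = 0))).card =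
    2 ^ (2 * m - 2 * M.card) := by
  have hle : M.card ≤ m := by simpa using Finset.card_le_univ M
  rw [card_shear' (fun v : (Fin m → ZMod 2) × (Fin m → ZMod 2) =>
        (∀ i ∈ M, (v.1 + v.2) i = 0) ∧ (∀ i ∈ M, v.2 i = 0))
      (fun w => (∀ i ∈ M, w.1 i = 0) ∧ (∀ i ∈ M, w.2 i = 0))
      (fun v => Iff.rfl)]
  rw [← Finset.univ_product_univ, Finset.filter_product (fun γ : Fin m → ZMod 2 => ∀ i ∈ M, γ i = 0) (fun γ : Fin m → ZMod 2 => ∀ i ∈ M, γ i = 0), Finset.card_product, card_pM,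
    ← pow_add]
  congr 1; omega


theorem stmt_0 {m : ℕ} (hm : 1 ≤ m) (M N : Finset (Fin m))
    (hMN : 1 ≤ M.card + N.card)
    (Ds : Finset ((Fin m → ZMod 2) × (Fin m → ZMod 2)))
    (hDs : Ds = deltaC M ×ˢ deltaC N) :
    Ds.card = 2 ^ (M.card + N.card) ∧
    ((Finset.univ : Finset ((Fin m → ZMod 2) × (Fin m → ZMod 2))).image (cwL Ds)).card = 2 ^ (2 * M.card) ∧
    (Finset.univ : Finset ((Fin m → ZMod 2) × (Fin m → ZMod 2))).val.map (fun v => hammingNorm (gcwL Ds v)) =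
      Multiset.replicate (2 ^ (2 * m - 2 * M.card) * (2 ^ M.card - 1) ^ 2)
          (2 ^ (M.card + N.card)) +
      Multiset.replicate (2 ^ (2 * m - 2 * M.card + 1) * (2 ^ M.card - 1))
          (2 ^ (M.card + N.card - 1)) +
      Multiset.replicate (2 ^ (2 * m - 2 * M.card))
          (0) := by
  classical
  refine ⟨?_, image_card_lemma M N Ds hDs, ?_⟩
  · rw [hDs, Finset.card_product, card_deltaC, card_deltaC, pow_add]
  -- weights on each class
  have wA : ∀ v : (Fin m → ZMod 2) × (Fin m → ZMod 2),
      (¬ ∀ i ∈ M, (v.1 + v.2) i = 0) → (¬ ∀ i ∈ M, v.2 i = 0) →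
      hammingNorm (gcwL Ds v) = 2 ^ (M.card + N.card) := by
    intro v h1 h2
    push_neg at h1 h2
    have hM1 : 1 ≤ M.card := by
      obtain ⟨i, hi, _⟩ := h1
      exact Finset.card_pos.mpr ⟨i, hi⟩
    rw [wt_eq M N Ds hDs v, count_one M _ h2, count_one M _ h1]
    have he : (2:ℕ) ^ (M.card - 1) + 2 ^ (M.card - 1) = 2 ^ M.card := by
      rw [← two_mul, ← pow_succ']
      congr 1; omega
    rw [he, ← pow_add, Nat.add_comm]
  have wB : ∀ v : (Fin m → ZMod 2) × (Fin m → ZMod 2),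
      (((∀ i ∈ M, (v.1 + v.2) i = 0) ∧ ¬(∀ i ∈ M, v.2 i = 0)) ∨
       (¬(∀ i ∈ M, (v.1 + v.2) i = 0) ∧ (∀ i ∈ M, v.2 i = 0))) →
      hammingNorm (gcwL Ds v) = 2 ^ (M.card + N.card - 1) := by
    intro v hv
    rw [wt_eq M N Ds hDs v]
    rcases hv with ⟨h1, h2⟩ | ⟨h1, h2⟩
    · push_neg at h2
      have hM1 : 1 ≤ M.card := by
        obtain ⟨i, hi, _⟩ := h2
        exact Finset.card_pos.mpr ⟨i, hi⟩
      rw [count_one M _ h2, count_zero M _ h1, Nat.add_zero, ← pow_add]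
      congr 1; omega
    · push_neg at h1
      have hM1 : 1 ≤ M.card := by
        obtain ⟨i, hi, _⟩ := h1
        exact Finset.card_pos.mpr ⟨i, hi⟩
      rw [count_one M _ h1, count_zero M _ h2, Nat.zero_add, ← pow_add]
      congr 1; omega
  have wC : ∀ v : (Fin m → ZMod 2) × (Fin m → ZMod 2),
      (∀ i ∈ M, (v.1 + v.2) i = 0) → (∀ i ∈ M, v.2 i = 0) →
      hammingNorm (gcwL Ds v) = 0 := by
    intro v h1 h2
    rw [wt_eq M N Ds hDs v, count_zero M _ h2, count_zero M _ h1]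
    simp
  -- multiset decomposition
  set U := (Finset.univ : Finset ((Fin m → ZMod 2) × (Fin m → ZMod 2))).val with hU
  set pA : (Fin m → ZMod 2) × (Fin m → ZMod 2) → Prop :=
    fun v => ¬(∀ i ∈ M, (v.1 + v.2) i = 0) ∧ ¬(∀ i ∈ M, v.2 i = 0) with hpA
  set pB : (Fin m → ZMod 2) × (Fin m → ZMod 2) → Prop :=
    fun v => ((∀ i ∈ M, (v.1 + v.2) i = 0) ∧ ¬(∀ i ∈ M, v.2 i = 0)) ∨
             (¬(∀ i ∈ M, (v.1 + v.2) i = 0) ∧ (∀ i ∈ M, v.2 i = 0)) with hpB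
  set pC : (Fin m → ZMod 2) × (Fin m → ZMod 2) → Prop :=
    fun v => (∀ i ∈ M, (v.1 + v.2) i = 0) ∧ (∀ i ∈ M, v.2 i = 0) with hpC
  have hBsub : U.filter (fun v => ¬ pA v) =
      U.filter pB + U.filter pC := by
    have h2 := Multiset.filter_add_not pB (U.filter (fun v => ¬ pA v))
    rw [Multiset.filter_filter, Multiset.filter_filter] at h2
    have e1 : U.filter (fun a => pB a ∧ ¬ pA a) = U.filter pB := by
      apply Multiset.filter_congr
      intro x _
      simp only [hpA, hpB]
      tauto
    have e2 : U.filter (fun a => ¬ pB a ∧ ¬ pA a) = U.filter pC := by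
      apply Multiset.filter_congr
      intro x _
      simp only [hpA, hpB, hpC]
      tauto
    rw [e1, e2] at h2
    exact h2.symm
  have hsplit : U = U.filter pA + (U.filter pB + U.filter pC) := by
    rw [← hBsub]
    exact (Multiset.filter_add_not pA U).symm
  have hmapA : (U.filter pA).map (fun v => hammingNorm (gcwL Ds v)) =
      Multiset.replicate (2 ^ (2 * m - 2 * M.card) * (2 ^ M.card - 1) ^ 2)
        (2 ^ (M.card + N.card)) := by
    rw [Multiset.map_congr rfl (fun x hx => by
      have h := (Multiset.mem_filter.mp hx).2
      exact wA x h.1 h.2)]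
    rw [Multiset.map_const']
    congr 1
    rw [hU, ← Finset.filter_val]
    show (Finset.filter pA Finset.univ).card = _
    exact cardA_lemma M
  have hmapB : (U.filter pB).map (fun v => hammingNorm (gcwL Ds v)) =
      Multiset.replicate (2 ^ (2 * m - 2 * M.card + 1) * (2 ^ M.card - 1))
        (2 ^ (M.card + N.card - 1)) := by
    rw [Multiset.map_congr rfl (fun x hx => wB x (Multiset.mem_filter.mp hx).2)]
    rw [Multiset.map_const']
    congr 1
    rw [hU, ← Finset.filter_val]
    show (Finset.filter pB Finset.univ).card = _
    exact cardB_lemma M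
  have hmapC : (U.filter pC).map (fun v => hammingNorm (gcwL Ds v)) =
      Multiset.replicate (2 ^ (2 * m - 2 * M.card)) 0 := by
    rw [Multiset.map_congr rfl (fun x hx => by
      have h := (Multiset.mem_filter.mp hx).2
      exact wC x h.1 h.2)]
    rw [Multiset.map_const']
    congr 1
    rw [hU, ← Finset.filter_val]
    show (Finset.filter pC Finset.univ).card = _
    exact cardC_lemma M
  conv_lhs => rw [hsplit]
  rw [Multiset.map_add, Multiset.map_add, hmapA, hmapB, hmapC, add_assoc]
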